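/- Let f ∈ SD²_{d−1}(0+) with d ∈ (0,1), i.e., f = F^{(0,1)} for some F ∈ SR²_d(0+). Define g_δ(t,v) = [f(t+δ, t−δv) − f(t, t−δv)] / f(t+δ, t). Then for every h₀ ∈ (0,1]: lim_{δ↓0} sup_{t ∈ [0,1]} | ∫₀^{h₀/δ} g_δ(t,v) dv + 1/d | = 0. -/

import Mathlib

open MeasureTheory ProbabilityTheory Filter Set intervalIntegral Real

/-- `p01 F t r = ∂F/∂r (t,r)` -/
noncomputable def p01 (F : ℝ → ℝ → ℝ) (t r : ℝ) : ℝ := deriv (fun x => F t x) r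
/-- `p10 F t r = ∂F/∂t (t,r)` -/
noncomputable def p10 (F : ℝ → ℝ → ℝ) (t r : ℝ) : ℝ := deriv (fun x => F x r) t
/-- `p11 F t r = ∂²F/∂t∂r (t,r)` -/
noncomputable def p11 (F : ℝ → ℝ → ℝ) (t r : ℝ) : ℝ := deriv (fun x => p01 F x r) t
/-- `p02 F t r = ∂²F/∂r² (t,r)` -/
noncomputable def p02 (F : ℝ → ℝ → ℝ) (t r : ℝ) : ℝ := deriv (fun x => p01 F t x) r

/-- `lim_{h↓0} sup_{t∈K} |G h t + c| = 0` for every compact `K ⊂ ℝ`. -/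
def UnifDiagLimit (G : ℝ → ℝ → ℝ) (c : ℝ) : Prop :=
  ∀ K : Set ℝ, IsCompact K → ∀ ε > 0, ∃ h₀ > 0, ∀ h : ℝ, 0 < h → h < h₀ →
    ∀ t ∈ K, |G h t + c| < ε

/-- `F ∈ SR²_ρ(0+)` : a function of smooth variation of index `ρ` at the diagonal. -/
def SmoothVar (F : ℝ → ℝ → ℝ) (ρ : ℝ) : Prop :=
  ContinuousOn (fun p : ℝ × ℝ => F p.1 p.2) {p : ℝ × ℝ | p.2 ≤ p.1} ∧
  ContDiffOn ℝ 2 (fun p : ℝ × ℝ => F p.1 p.2) {p : ℝ × ℝ | p.2 < p.1} ∧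
  (∀ t r : ℝ, r < t → 0 < F t r) ∧
  UnifDiagLimit (fun h t => h * p01 F t (t - h) / F t (t - h)) ρ ∧
  UnifDiagLimit (fun h t => h * p10 F (t + h) t / F (t + h) t) (-ρ) ∧
  UnifDiagLimit (fun h t => h ^ 2 * p11 F t (t - h) / F t (t - h)) (ρ * (ρ - 1)) ∧
  UnifDiagLimit (fun h t => h ^ 2 * p02 F t (t - h) / F t (t - h)) (-(ρ * (ρ - 1)))


section Helpers

lemma isOpenU : IsOpen {p : ℝ × ℝ | p.2 < p.1} :=
  isOpen_lt continuous_snd continuous_fst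

lemma diffAt {F : ℝ → ℝ → ℝ}
    (hC : ContDiffOn ℝ 2 (fun p : ℝ × ℝ => F p.1 p.2) {p : ℝ × ℝ | p.2 < p.1})
    {t r : ℝ} (h : r < t) :
    DifferentiableAt ℝ (fun p : ℝ × ℝ => F p.1 p.2) (t, r) :=
  (hC.differentiableOn (by norm_num)).differentiableAt (isOpenU.mem_nhds h)

lemma hasDerivAt_p01 {F : ℝ → ℝ → ℝ}
    (hC : ContDiffOn ℝ 2 (fun p : ℝ × ℝ => F p.1 p.2) {p : ℝ × ℝ | p.2 < p.1})
    {t r : ℝ} (h : r < t) :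
    HasDerivAt (fun x => F t x) (p01 F t r) r ∧
      p01 F t r = fderiv ℝ (fun p : ℝ × ℝ => F p.1 p.2) (t, r) (0, 1) := by
  have hfd := (diffAt hC h).hasFDerivAt
  have hγ : HasDerivAt (fun x : ℝ => ((t, x) : ℝ × ℝ)) (0, 1) r :=
    HasDerivAt.prodMk (hasDerivAt_const r t) (hasDerivAt_id r)
  have h2 : HasDerivAt (fun x => F t x) (fderiv ℝ (fun p : ℝ × ℝ => F p.1 p.2) (t, r) (0, 1)) r :=
    hfd.comp_hasDerivAt r hγ
  have he : p01 F t r = fderiv ℝ (fun p : ℝ × ℝ => F p.1 p.2) (t, r) (0, 1) := by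
    simp only [p01]; exact h2.deriv
  exact ⟨he ▸ h2, he⟩

lemma hasDerivAt_p10 {F : ℝ → ℝ → ℝ}
    (hC : ContDiffOn ℝ 2 (fun p : ℝ × ℝ => F p.1 p.2) {p : ℝ × ℝ | p.2 < p.1})
    {t r : ℝ} (h : r < t) :
    HasDerivAt (fun x => F x r) (p10 F t r) t ∧
      p10 F t r = fderiv ℝ (fun p : ℝ × ℝ => F p.1 p.2) (t, r) (1, 0) := by
  have hfd := (diffAt hC h).hasFDerivAt
  have hγ : HasDerivAt (fun x : ℝ => ((x, r) : ℝ × ℝ)) (1, 0) t :=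
    HasDerivAt.prodMk (hasDerivAt_id t) (hasDerivAt_const t r)
  have h2 : HasDerivAt (fun x => F x r) (fderiv ℝ (fun p : ℝ × ℝ => F p.1 p.2) (t, r) (1, 0)) t :=
    by have h3 := hfd.comp_hasDerivAt t hγ; exact h3
  have he : p10 F t r = fderiv ℝ (fun p : ℝ × ℝ => F p.1 p.2) (t, r) (1, 0) := by
    simp only [p10]; exact h2.deriv
  exact ⟨he ▸ h2, he⟩

lemma contOn_p01 {F : ℝ → ℝ → ℝ}
    (hC : ContDiffOn ℝ 2 (fun p : ℝ × ℝ => F p.1 p.2) {p : ℝ × ℝ | p.2 < p.1}) :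
    ContinuousOn (fun p : ℝ × ℝ => p01 F p.1 p.2) {p : ℝ × ℝ | p.2 < p.1} := by
  have hf' : ContinuousOn (fun p => fderiv ℝ (fun p : ℝ × ℝ => F p.1 p.2) p)
      {p : ℝ × ℝ | p.2 < p.1} :=
    hC.continuousOn_fderiv_of_isOpen isOpenU (by norm_num)
  have : ContinuousOn (fun p : ℝ × ℝ => fderiv ℝ (fun p : ℝ × ℝ => F p.1 p.2) p ((0:ℝ), (1:ℝ)))
      {p : ℝ × ℝ | p.2 < p.1} := hf'.clm_apply continuousOn_const
  refine this.congr fun p hp => ?_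
  exact (hasDerivAt_p01 hC hp).2

lemma contOn_p10 {F : ℝ → ℝ → ℝ}
    (hC : ContDiffOn ℝ 2 (fun p : ℝ × ℝ => F p.1 p.2) {p : ℝ × ℝ | p.2 < p.1}) :
    ContinuousOn (fun p : ℝ × ℝ => p10 F p.1 p.2) {p : ℝ × ℝ | p.2 < p.1} := by
  have hf' : ContinuousOn (fun p => fderiv ℝ (fun p : ℝ × ℝ => F p.1 p.2) p)
      {p : ℝ × ℝ | p.2 < p.1} :=
    hC.continuousOn_fderiv_of_isOpen isOpenU (by norm_num)
  have : ContinuousOn (fun p : ℝ × ℝ => fderiv ℝ (fun p : ℝ × ℝ => F p.1 p.2) p ((1:ℝ), (0:ℝ)))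
      {p : ℝ × ℝ | p.2 < p.1} := hf'.clm_apply continuousOn_const
  refine this.congr fun p hp => ?_
  exact (hasDerivAt_p10 hC hp).2

lemma ratio_mono {φ φ' : ℝ → ℝ} {a b c : ℝ} (ha : 0 < a) (hab : a ≤ b)
    (hd : ∀ x ∈ Icc a b, HasDerivAt φ (φ' x) x)
    (hsign : ∀ x ∈ Icc a b, x * φ' x + c * φ x ≤ 0) :
    φ b * b ^ c ≤ φ a * a ^ c := by
  set ψ := fun x => φ x * x ^ c with hψ
  have hψd : ∀ x ∈ Icc a b, HasDerivAt ψ (φ' x * x ^ c + φ x * (c * x ^ (c - 1))) x :=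
    fun x hx => (hd x hx).mul
      (Real.hasDerivAt_rpow_const (Or.inl (ne_of_gt (lt_of_lt_of_le ha hx.1))))
  have hanti : AntitoneOn ψ (Icc a b) := by
    apply antitoneOn_of_deriv_nonpos (convex_Icc a b)
    · exact fun x hx => ((hψd x hx).continuousAt).continuousWithinAt
    · intro x hx
      rw [interior_Icc] at hx
      exact ((hψd x (Ioo_subset_Icc_self hx)).differentiableAt).differentiableWithinAt
    · intro x hx
      rw [interior_Icc] at hx
      have hx' : x ∈ Icc a b := Ioo_subset_Icc_self hx
      have hx0 : 0 < x := lt_of_lt_of_le ha hx'.1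
      rw [(hψd x hx').deriv]
      have hxc : x ^ c = x * x ^ (c - 1) := by
        rw [show c = 1 + (c - 1) by ring, Real.rpow_add hx0, Real.rpow_one]
        ring_nf
      have heq : φ' x * x ^ c + φ x * (c * x ^ (c - 1))
          = x ^ (c - 1) * (x * φ' x + c * φ x) := by
        rw [hxc]; ring
      rw [heq]
      exact mul_nonpos_of_nonneg_of_nonpos (Real.rpow_nonneg hx0.le _) (hsign x hx')
  exact hanti ⟨le_refl a, hab⟩ ⟨hab, le_refl b⟩ hab

lemma sandwich {F : ℝ → ℝ → ℝ}
    (hC : ContDiffOn ℝ 2 (fun p : ℝ × ℝ => F p.1 p.2) {p : ℝ × ℝ | p.2 < p.1})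
    (hpos : ∀ t r : ℝ, r < t → 0 < F t r)
    {d ε h₂ t : ℝ} (hd0 : 0 ≤ d) (hh₂ : 0 < h₂)
    (hb : ∀ h : ℝ, 0 < h → h ≤ h₂ → |h * p01 F t (t - h) / F t (t - h) + d| ≤ ε) :
    ∀ h : ℝ, 0 < h → h ≤ h₂ →
      F t (t - h₂) * (h / h₂) ^ (d + ε) ≤ F t (t - h) ∧
      F t (t - h) ≤ F t (t - h₂) * (h / h₂) ^ (d - ε) ∧
      |p01 F t (t - h)| ≤ (d + ε) * F t (t - h) / h := by
  set φ : ℝ → ℝ := fun h => F t (t - h) with hφ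
  have hφpos : ∀ h : ℝ, 0 < h → 0 < φ h := fun h h0 => hpos t (t - h) (by linarith)
  have hder : ∀ h : ℝ, 0 < h → HasDerivAt φ (-(p01 F t (t - h))) h := by
    intro h h0
    have hlt : t - h < t := by linarith
    have hinner : HasDerivAt (fun x : ℝ => t - x) (-1) h := by
      exact (hasDerivAt_id h).const_sub t
    have := (hasDerivAt_p01 hC hlt).1.comp h hinner
    simp only [mul_neg, mul_one] at this
    exact this
  -- bounds on h * p01 / φ
  have hbnd : ∀ h : ℝ, 0 < h → h ≤ h₂ →
      (-d - ε) * φ h ≤ h * p01 F t (t - h) ∧ h * p01 F t (t - h) ≤ (-d + ε) * φ h := by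
    intro h h0 hh
    have hb' := abs_le.1 (hb h h0 hh)
    have hp := hφpos h h0
    constructor
    · have h1 : -d - ε ≤ h * p01 F t (t - h) / φ h := by
        have := hb'.1; linarith
      rw [le_div_iff₀ hp] at h1
      linarith
    · have h1 : h * p01 F t (t - h) / φ h ≤ -d + ε := by
        have := hb'.2; linarith
      rw [div_le_iff₀ hp] at h1
      linarith
  intro h h0 hh
  have hp := hφpos h h0
  have hp2 := hφpos h₂ hh₂
  have hIcc : ∀ x ∈ Icc h h₂, 0 < x := fun x hx => lt_of_lt_of_le h0 hx.1
  have hdIcc : ∀ x ∈ Icc h h₂, HasDerivAt φ (-(p01 F t (t - x))) x :=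
    fun x hx => hder x (hIcc x hx)
  -- lower bound
  have hlow : φ h₂ * (h / h₂) ^ (d + ε) ≤ φ h := by
    have A : φ h₂ * h₂ ^ (-(d + ε)) ≤ φ h * h ^ (-(d + ε)) := by
      apply ratio_mono h0 hh hdIcc
      intro x hx
      have hx0 := hIcc x hx
      have := (hbnd x hx0 (hx.2)).1
      nlinarith [hφpos x hx0]
    have hne : h ^ (d + ε) ≠ 0 := ne_of_gt (Real.rpow_pos_of_pos h0 _)
    have hid : h ^ (-(d + ε)) * h ^ (d + ε) = 1 := by
      rw [← Real.rpow_add h0, neg_add_cancel, Real.rpow_zero]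
    have hdr : (h / h₂) ^ (d + ε) = h ^ (d + ε) * h₂ ^ (-(d + ε)) := by
      rw [Real.div_rpow h0.le hh₂.le, Real.rpow_neg hh₂.le, div_eq_mul_inv]
    calc φ h₂ * (h / h₂) ^ (d + ε) = (φ h₂ * h₂ ^ (-(d + ε))) * h ^ (d + ε) := by
            rw [hdr]; ring
      _ ≤ (φ h * h ^ (-(d + ε))) * h ^ (d + ε) := by
            have := Real.rpow_pos_of_pos h0 (d + ε)
            nlinarith [A, this]
      _ = φ h * (h ^ (-(d + ε)) * h ^ (d + ε)) := by ring
      _ = φ h := by rw [hid, mul_one]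
  -- upper bound
  have hup : φ h ≤ φ h₂ * (h / h₂) ^ (d - ε) := by
    have A : (-φ h₂) * h₂ ^ (-(d - ε)) ≤ (-φ h) * h ^ (-(d - ε)) := by
      apply ratio_mono h0 hh (φ' := fun x => -(-(p01 F t (t - x))))
      · intro x hx
        exact (hdIcc x hx).neg
      · intro x hx
        have hx0 := hIcc x hx
        have := (hbnd x hx0 (hx.2)).2
        nlinarith [hφpos x hx0]
    have hid : h ^ (-(d - ε)) * h ^ (d - ε) = 1 := by
      rw [← Real.rpow_add h0, neg_add_cancel, Real.rpow_zero]
    have hdr : (h / h₂) ^ (d - ε) = h ^ (d - ε) * h₂ ^ (-(d - ε)) := by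
      rw [Real.div_rpow h0.le hh₂.le, Real.rpow_neg hh₂.le, div_eq_mul_inv]
    have A' : φ h * h ^ (-(d - ε)) ≤ φ h₂ * h₂ ^ (-(d - ε)) := by nlinarith [A]
    calc φ h = φ h * (h ^ (-(d - ε)) * h ^ (d - ε)) := by rw [hid, mul_one]
      _ = (φ h * h ^ (-(d - ε))) * h ^ (d - ε) := by ring
      _ ≤ (φ h₂ * h₂ ^ (-(d - ε))) * h ^ (d - ε) := by
            have := Real.rpow_pos_of_pos h0 (d - ε)
            nlinarith [A', this]
      _ = φ h₂ * (h / h₂) ^ (d - ε) := by rw [hdr]; ring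
  refine ⟨hlow, hup, ?_⟩
  -- derivative bound
  have hb' := hb h h0 hh
  have habs : |h * p01 F t (t - h) / φ h| ≤ d + ε := by
    have heq : h * p01 F t (t - h) / φ h
        = (h * p01 F t (t - h) / φ h + d) + (-d) := by ring
    rw [heq]
    refine (abs_add_le _ _).trans ?_
    rw [abs_neg, abs_of_nonneg hd0]
    linarith
  have : p01 F t (t - h) = (h * p01 F t (t - h) / φ h) * (φ h / h) := by
    field_simp
  rw [this, abs_mul, abs_of_pos (div_pos hp h0)]
  calc |h * p01 F t (t - h) / φ h| * (φ h / h) ≤ (d + ε) * (φ h / h) := by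
        apply mul_le_mul_of_nonneg_right habs (le_of_lt (div_pos hp h0))
    _ = (d + ε) * φ h / h := by ring

lemma ftc_piece {F : ℝ → ℝ → ℝ}
    (hcont : ContinuousOn (fun p : ℝ × ℝ => F p.1 p.2) {p : ℝ × ℝ | p.2 ≤ p.1})
    (hC : ContDiffOn ℝ 2 (fun p : ℝ × ℝ => F p.1 p.2) {p : ℝ × ℝ | p.2 < p.1})
    {s t δ L : ℝ} (hts : t ≤ s) (hδ : 0 < δ) (hL : 0 ≤ L)
    (hint : IntervalIntegrable (fun v => p01 F s (t - δ * v)) volume 0 L) :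
    ∫ v in (0:ℝ)..L, p01 F s (t - δ * v) = (F s t - F s (t - δ * L)) / δ := by
  set g : ℝ → ℝ := fun v => -(F s (t - δ * v)) / δ with hg
  have hgc : ContinuousOn g (Icc 0 L) := by
    have hpath : Continuous (fun v : ℝ => ((s, t - δ * v) : ℝ × ℝ)) := by
      apply Continuous.prodMk continuous_const
      exact (continuous_const.sub (continuous_const.mul continuous_id))
    have hmap : MapsTo (fun v : ℝ => ((s, t - δ * v) : ℝ × ℝ)) (Icc 0 L)
        {p : ℝ × ℝ | p.2 ≤ p.1} := by
      intro v hv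
      simp only [mem_setOf_eq]
      nlinarith [hv.1]
    have hc : ContinuousOn (fun v : ℝ => F s (t - δ * v)) (Icc 0 L) :=
      hcont.comp hpath.continuousOn hmap
    exact hc.neg.div_const δ
  have hgd : ∀ v ∈ Ioo 0 L, HasDerivWithinAt g (p01 F s (t - δ * v)) (Ioi v) v := by
    intro v hv
    have hlt : t - δ * v < s := by nlinarith [hv.1]
    have hout := (hasDerivAt_p01 hC hlt).1
    have hin : HasDerivAt (fun v : ℝ => t - δ * v) (-δ) v := by
      have h9 := ((hasDerivAt_id v).const_mul δ).const_sub t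
      rw [mul_one] at h9
      exact h9
    have hcomp : HasDerivAt (fun v : ℝ => F s (t - δ * v))
        (p01 F s (t - δ * v) * (-δ)) v := hout.comp v hin
    have : HasDerivAt g (-(p01 F s (t - δ * v) * (-δ)) / δ) v := by
      exact (hcomp.neg).div_const δ
    have heq : -(p01 F s (t - δ * v) * (-δ)) / δ = p01 F s (t - δ * v) := by
      field_simp
    rw [heq] at this
    exact this.hasDerivWithinAt
  have := intervalIntegral.integral_eq_sub_of_hasDeriv_right_of_le hL hgc hgd hint
  rw [this]
  simp only [hg]
  rw [mul_zero, sub_zero]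
  ring

lemma Ftt_zero {F : ℝ → ℝ → ℝ}
    (hcont : ContinuousOn (fun p : ℝ × ℝ => F p.1 p.2) {p : ℝ × ℝ | p.2 ≤ p.1})
    (hpos : ∀ t r : ℝ, r < t → 0 < F t r)
    {t c₂ h₂ a : ℝ} (hh₂ : 0 < h₂) (ha : 0 < a)
    (hup : ∀ h : ℝ, 0 < h → h ≤ h₂ → F t (t - h) ≤ c₂ * (h / h₂) ^ a) :
    F t t = 0 := by
  have h1 : Tendsto (fun h : ℝ => F t (t - h)) (nhdsWithin 0 (Ioi 0)) (nhds (F t t)) := by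
    have hcw : ContinuousWithinAt (fun p : ℝ × ℝ => F p.1 p.2)
        {p : ℝ × ℝ | p.2 ≤ p.1} (t, t) := hcont (t, t) (by simp)
    have hpath : Tendsto (fun h : ℝ => ((t, t - h) : ℝ × ℝ)) (nhdsWithin 0 (Ioi 0))
        (nhdsWithin (t, t) {p : ℝ × ℝ | p.2 ≤ p.1}) := by
      rw [tendsto_nhdsWithin_iff]
      constructor
      · have : Continuous (fun h : ℝ => ((t, t - h) : ℝ × ℝ)) := by
          exact Continuous.prodMk continuous_const (continuous_const.sub continuous_id)
        have h0 := this.tendsto 0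
        have h0' := h0.mono_left (nhdsWithin_le_nhds (s := Ioi (0:ℝ)))
        have he : ((t, t) : ℝ × ℝ) = (t, t - 0) := by norm_num
        rw [he]
        exact h0'
      · filter_upwards [self_mem_nhdsWithin] with h hh
        have hh' : (0:ℝ) < h := hh
        show ((t, t - h) : ℝ × ℝ) ∈ {p : ℝ × ℝ | p.2 ≤ p.1}
        simp only [mem_setOf_eq]
        linarith
    exact hcw.tendsto.comp hpath
  have h2 : Tendsto (fun h : ℝ => F t (t - h)) (nhdsWithin 0 (Ioi 0)) (nhds 0) := by
    have hub : Tendsto (fun h : ℝ => c₂ * (h / h₂) ^ a) (nhdsWithin 0 (Ioi 0)) (nhds 0) := by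
      have hr : ContinuousAt (fun x : ℝ => x ^ a) 0 :=
        Real.continuousAt_rpow_const 0 a (Or.inr ha.le)
      have hdiv : Tendsto (fun h : ℝ => h / h₂) (nhdsWithin 0 (Ioi 0)) (nhds 0) := by
        have : Tendsto (fun h : ℝ => h / h₂) (nhds 0) (nhds (0 / h₂)) :=
          (tendsto_id.div_const h₂)
        simpa using this.mono_left nhdsWithin_le_nhds
      have := (hr.tendsto.comp hdiv).const_mul c₂
      simpa [Real.zero_rpow (ne_of_gt ha)] using this
    apply squeeze_zero' ?_ ?_ hub
    · filter_upwards [self_mem_nhdsWithin] with h hh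
      exact le_of_lt (hpos t (t - h) (by simp only [mem_Ioi] at hh; linarith))
    · filter_upwards [Ioc_mem_nhdsGT_of_mem ⟨le_refl 0, hh₂⟩] with h hh
      exact hup h hh.1 hh.2
  exact tendsto_nhds_unique h1 h2

end Helpers


set_option maxHeartbeats 1000000 in
/-- Lemma 5(b): for `f ∈ SD²_{d−1}(0+)` and
`g_δ(t,v) = [f(t+δ,t−δv) − f(t,t−δv)]/f(t+δ,t)`, for every `h₀ ∈ (0,1]`,
`lim_{δ↓0} sup_{t∈[0,1]} |∫₀^{h₀/δ} g_δ(t,v) dv + 1/d| = 0`. -/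
theorem lemma5b (d : ℝ) (hd : d ∈ Set.Ioo (0:ℝ) 1)
    (F : ℝ → ℝ → ℝ) (hF : SmoothVar F d)
    (f : ℝ → ℝ → ℝ) (hf : ∀ t r : ℝ, f t r = p01 F t r) :
    ∀ h₀ ∈ Set.Ioc (0:ℝ) 1, ∀ ε > (0:ℝ), ∃ δ₀ > (0:ℝ), ∀ δ : ℝ, 0 < δ → δ < δ₀ →
      ∀ t ∈ Set.Icc (0:ℝ) 1,
        |(∫ v in (0:ℝ)..(h₀ / δ),
            (f (t + δ) (t - δ * v) - f t (t - δ * v)) / f (t + δ) t) + 1 / d| < ε := by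

  obtain ⟨hcont, hC, hpos, hp01lim, _hp10lim, _h11, _h02⟩ := hF
  obtain ⟨hd0, hd1⟩ := hd
  intro h₀ hh₀ ε hε
  obtain ⟨hh₀0, hh₀1⟩ := hh₀
  -- choice of auxiliary epsilon
  set ε₁ : ℝ := min (min ((1 - d) / 2) (d / 2)) (ε * d ^ 2 / 8) with hε₁def
  have hε₁pos : 0 < ε₁ := by
    refine lt_min (lt_min (by linarith) (by linarith)) (by positivity)
  have hε₁a : ε₁ ≤ (1 - d) / 2 := (min_le_left _ _).trans (min_le_left _ _)
  have hε₁b : ε₁ ≤ d / 2 := (min_le_left _ _).trans (min_le_right _ _)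
  have hε₁c : ε₁ ≤ ε * d ^ 2 / 8 := min_le_right _ _
  have hdε₁ : 0 < d - ε₁ := by linarith
  -- uniform limit on a big compact set
  obtain ⟨h₁, hh₁pos, hP⟩ := hp01lim (Icc (-2 : ℝ) 4) isCompact_Icc ε₁ hε₁pos
  set h₂ : ℝ := min (min (h₁ / 2) h₀) 1 with hh₂def
  have hh₂pos : 0 < h₂ := lt_min (lt_min (by linarith) hh₀0) one_pos
  have hh₂a : h₂ ≤ h₁ / 2 := (min_le_left _ _).trans (min_le_left _ _)
  have hh₂b : h₂ ≤ h₀ := (min_le_left _ _).trans (min_le_right _ _)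
  have hh₂c : h₂ ≤ 1 := min_le_right _ _
  have hb : ∀ t' ∈ Icc (-1:ℝ) 3, ∀ h : ℝ, 0 < h → h ≤ h₂ →
      |h * p01 F t' (t' - h) / F t' (t' - h) + d| ≤ ε₁ := by
    intro t' ht' h h0 hh
    have hm : t' ∈ Icc (-2:ℝ) 4 := ⟨by linarith [ht'.1], by linarith [ht'.2]⟩
    exact le_of_lt (hP h h0 (by linarith) t' hm)
  have hsand : ∀ t' ∈ Icc (-1:ℝ) 3, ∀ h : ℝ, 0 < h → h ≤ h₂ →
      F t' (t' - h₂) * (h / h₂) ^ (d + ε₁) ≤ F t' (t' - h) ∧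
      F t' (t' - h) ≤ F t' (t' - h₂) * (h / h₂) ^ (d - ε₁) ∧
      |p01 F t' (t' - h)| ≤ (d + ε₁) * F t' (t' - h) / h :=
    fun t' ht' => sandwich hC hpos hd0.le hh₂pos (hb t' ht')
  -- extremes of t' ↦ F t' (t' - h₂) on [-1, 3]
  have hGcont : ContinuousOn (fun t' : ℝ => F t' (t' - h₂)) (Icc (-1:ℝ) 3) := by
    have hpath : Continuous (fun t' : ℝ => ((t', t' - h₂) : ℝ × ℝ)) :=
      continuous_id.prodMk (continuous_id.sub continuous_const)
    refine hcont.comp hpath.continuousOn ?_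
    intro x _
    simp only [mem_setOf_eq]
    linarith
  have hne13 : (Icc (-1:ℝ) 3).Nonempty := nonempty_Icc.2 (by norm_num)
  obtain ⟨x₁, hx₁m, hx₁'⟩ := isCompact_Icc.exists_isMinOn hne13 hGcont
  obtain ⟨x₂, hx₂m, hx₂'⟩ := isCompact_Icc.exists_isMaxOn hne13 hGcont
  have hx₁ : ∀ y ∈ Icc (-1:ℝ) 3, F x₁ (x₁ - h₂) ≤ F y (y - h₂) := fun y hy => hx₁' hy
  have hx₂ : ∀ y ∈ Icc (-1:ℝ) 3, F y (y - h₂) ≤ F x₂ (x₂ - h₂) := fun y hy => hx₂' hy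
  set c₁ : ℝ := F x₁ (x₁ - h₂) with hc₁def
  set c₂ : ℝ := F x₂ (x₂ - h₂) with hc₂def
  have hc₁pos : 0 < c₁ := hpos _ _ (by linarith)
  have hc₂pos : 0 < c₂ := hpos _ _ (by linarith)
  -- compact set at distance ≥ h₂ from the diagonal; bounds for p10, p01 there
  set S : Set (ℝ × ℝ) := (Icc (-1:ℝ) 3 ×ˢ Icc (-2:ℝ) 2) ∩ {p : ℝ × ℝ | p.2 + h₂ ≤ p.1}
    with hSdef
  have hScpt : IsCompact S :=
    (isCompact_Icc.prod isCompact_Icc).inter_right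
      (isClosed_le (continuous_snd.add continuous_const) continuous_fst)
  have hSsub : S ⊆ {p : ℝ × ℝ | p.2 < p.1} := by
    intro p hp
    have h2 := hp.2
    simp only [mem_setOf_eq] at h2 ⊢
    linarith
  obtain ⟨M, hM⟩ := hScpt.exists_bound_of_continuousOn ((contOn_p10 hC).mono hSsub)
  obtain ⟨M₁, hM₁⟩ := hScpt.exists_bound_of_continuousOn ((contOn_p01 hC).mono hSsub)
  set M' : ℝ := max M 0 with hM'def
  set M₁' : ℝ := max M₁ 0 with hM₁'def
  have hM'0 : 0 ≤ M' := le_max_right _ _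
  have hM₁'0 : 0 ≤ M₁' := le_max_right _ _
  -- pointwise bound on p01 near the diagonal
  set K₁ : ℝ := (d + ε₁) * c₂ * h₂ ^ (-(d - ε₁)) with hK₁def
  set K₂ : ℝ := M₁' * h₀ ^ (1 - d + ε₁) with hK₂def
  set C₀ : ℝ := K₁ + K₂ with hC₀def
  have hK₁0 : 0 ≤ K₁ := by positivity
  have hK₂0 : 0 ≤ K₂ := by positivity
  have hC₀0 : 0 ≤ C₀ := by positivity
  have hptb : ∀ t' ∈ Icc (0:ℝ) 2, ∀ h : ℝ, 0 < h → h ≤ h₀ →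
      |p01 F t' (t' - h)| ≤ C₀ * h ^ (d - ε₁ - 1) := by
    intro t' ht' h h0 hh
    have ht'' : t' ∈ Icc (-1:ℝ) 3 := ⟨by linarith [ht'.1], by linarith [ht'.2]⟩
    have hrp0 : (0:ℝ) < h ^ (d - ε₁ - 1) := Real.rpow_pos_of_pos h0 _
    rcases le_or_gt h h₂ with hcase | hcase
    · obtain ⟨_, hup, hder⟩ := hsand t' ht'' h h0 hcase
      have hupc : F t' (t' - h) ≤ c₂ * (h / h₂) ^ (d - ε₁) :=
        hup.trans (mul_le_mul_of_nonneg_right (hx₂ t' ht'')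
          (Real.rpow_nonneg (by positivity) _))
      have heq : (d + ε₁) * (c₂ * (h / h₂) ^ (d - ε₁)) / h = K₁ * h ^ (d - ε₁ - 1) := by
        rw [hK₁def, Real.rpow_sub h0 (d - ε₁) 1, Real.rpow_one,
          Real.div_rpow h0.le hh₂pos.le, Real.rpow_neg hh₂pos.le]
        field_simp
      calc |p01 F t' (t' - h)| ≤ (d + ε₁) * F t' (t' - h) / h := hder
        _ ≤ (d + ε₁) * (c₂ * (h / h₂) ^ (d - ε₁)) / h := by
            gcongr
        _ = K₁ * h ^ (d - ε₁ - 1) := heq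
        _ ≤ C₀ * h ^ (d - ε₁ - 1) := by
            refine mul_le_mul_of_nonneg_right ?_ hrp0.le
            rw [hC₀def]; linarith
    · have hmem : ((t', t' - h) : ℝ × ℝ) ∈ S := by
        have hI2 : t' - h ∈ Icc (-2:ℝ) 2 := ⟨by linarith [ht'.1], by linarith [ht'.2]⟩
        exact ⟨⟨ht'', hI2⟩, by simp only [mem_setOf_eq]; linarith⟩
      have hM₁b : |p01 F t' (t' - h)| ≤ M₁' := by
        have := hM₁ _ hmem
        rw [Real.norm_eq_abs] at this
        exact this.trans (le_max_left _ _)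
      have h2eq : K₂ * h₀ ^ (d - ε₁ - 1) = M₁' := by
        rw [hK₂def, mul_assoc, ← Real.rpow_add hh₀0,
          show (1 - d + ε₁) + (d - ε₁ - 1) = 0 by ring, Real.rpow_zero, mul_one]
      calc |p01 F t' (t' - h)| ≤ M₁' := hM₁b
        _ = K₂ * h₀ ^ (d - ε₁ - 1) := h2eq.symm
        _ ≤ K₂ * h ^ (d - ε₁ - 1) := by
            refine mul_le_mul_of_nonneg_left
              (Real.rpow_le_rpow_of_nonpos h0 hh (by linarith)) hK₂0
        _ ≤ C₀ * h ^ (d - ε₁ - 1) := by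
            refine mul_le_mul_of_nonneg_right ?_ hrp0.le
            rw [hC₀def]; linarith
  -- choice of δ₀
  set a : ℝ := 1 - d - ε₁ with hadef
  have ha0 : 0 < a := by rw [hadef]; linarith
  set C₂ : ℝ := M' * h₂ ^ (d + ε₁) / ((d - ε₁) * c₁) with hC₂def
  have hC₂0 : 0 ≤ C₂ := by positivity
  set W : ℝ := (ε / 2) / (C₂ + 1) with hWdef
  have hWpos : 0 < W := by positivity
  have hCW : (C₂ + 1) * W = ε / 2 := by
    rw [hWdef]; field_simp
  refine ⟨min h₂ (W ^ (1/a)), lt_min hh₂pos (Real.rpow_pos_of_pos hWpos _), ?_⟩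
  intro δ hδ0 hδlt t ht
  have hδh₂ : δ < h₂ := lt_of_lt_of_le hδlt (min_le_left _ _)
  have hδW : δ < W ^ (1/a) := lt_of_lt_of_le hδlt (min_le_right _ _)
  have hδ1 : δ < 1 := lt_of_lt_of_le hδh₂ hh₂c
  have hδsmall : C₂ * δ ^ a < ε / 2 := by
    have h1 : δ ^ a < W := by
      have h2 := Real.rpow_lt_rpow hδ0.le hδW ha0
      rwa [← Real.rpow_mul hWpos.le, one_div, inv_mul_cancel₀ (ne_of_gt ha0),
        Real.rpow_one] at h2
    have hpa : 0 < δ ^ a := Real.rpow_pos_of_pos hδ0 _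
    calc C₂ * δ ^ a ≤ (C₂ + 1) * δ ^ a := by
          refine mul_le_mul_of_nonneg_right (by linarith only []) hpa.le
      _ < (C₂ + 1) * W := by
          refine mul_lt_mul_of_pos_left h1 (by linarith only [hC₂0])
      _ = ε / 2 := hCW
  obtain ⟨ht0, ht1⟩ := ht
  have htm : t ∈ Icc (-1:ℝ) 3 := ⟨by linarith, by linarith⟩
  have htsm : t + δ ∈ Icc (-1:ℝ) 3 := ⟨by linarith, by linarith⟩
  simp only [hf]
  set L : ℝ := h₀ / δ with hLdef
  have hL0 : 0 < L := div_pos hh₀0 hδ0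
  have hδL : δ * L = h₀ := by rw [hLdef]; field_simp
  set D : ℝ := p01 F (t + δ) t with hDdef
  set Y : ℝ := F (t + δ) t with hYdef
  have hYpos : 0 < Y := hpos _ _ (by linarith)
  have hQ0 : |δ * D / Y + d| ≤ ε₁ := by
    have h3 := hb (t + δ) htsm δ hδ0 hδh₂.le
    rw [show t + δ - δ = t by ring] at h3
    exact h3
  set Q : ℝ := δ * D / Y with hQdef
  have hQub : Q ≤ -(d - ε₁) := by
    have := (abs_le.1 hQ0).2; linarith
  have hQneg : Q < 0 := by linarith
  have hQne : Q ≠ 0 := ne_of_lt hQneg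
  have hQabs : d - ε₁ ≤ |Q| := by
    rw [abs_of_neg hQneg]; linarith
  have hDval : D = Q * Y / δ := by
    rw [hQdef]; field_simp
  have hDne : D ≠ 0 := by
    rw [hDval]
    exact div_ne_zero (mul_ne_zero hQne (ne_of_gt hYpos)) (ne_of_gt hδ0)
  -- integrability of both integrands
  have hmeas : Measurable (fun v : ℝ => p01 F t (t - δ * v)) := by
    have hm2 : Measurable (fun v : ℝ => t - δ * v) :=
      measurable_const.sub (measurable_id.const_mul δ)
    exact (measurable_deriv _).comp hm2
  have hI₂ : IntervalIntegrable (fun v => p01 F t (t - δ * v)) volume 0 L := by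
    have hgint : IntervalIntegrable
        (fun v : ℝ => (C₀ * δ ^ (d - ε₁ - 1)) * v ^ (d - ε₁ - 1)) volume 0 L :=
      (intervalIntegrable_rpow' (by linarith : (-1:ℝ) < d - ε₁ - 1)).const_mul _
    refine hgint.mono_fun hmeas.aestronglyMeasurable ?_
    rw [uIoc_of_le hL0.le]
    refine (ae_restrict_iff' measurableSet_Ioc).2 (ae_of_all _ ?_)
    intro v hv
    have hv0 : 0 < v := hv.1
    have hδv0 : 0 < δ * v := by positivity
    have hδvh₀ : δ * v ≤ h₀ := by
      calc δ * v ≤ δ * L := mul_le_mul_of_nonneg_left hv.2 hδ0.le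
        _ = h₀ := hδL
    have hbv := hptb t ⟨ht0, by linarith⟩ (δ * v) hδv0 hδvh₀
    simp only [Real.norm_eq_abs]
    have hsplit : (δ * v) ^ (d - ε₁ - 1) = δ ^ (d - ε₁ - 1) * v ^ (d - ε₁ - 1) :=
      Real.mul_rpow hδ0.le hv0.le
    calc |p01 F t (t - δ * v)| ≤ C₀ * (δ * v) ^ (d - ε₁ - 1) := hbv
      _ = C₀ * δ ^ (d - ε₁ - 1) * v ^ (d - ε₁ - 1) := by rw [hsplit]; ring
      _ ≤ |C₀ * δ ^ (d - ε₁ - 1) * v ^ (d - ε₁ - 1)| := le_abs_self _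
  have hI₁ : IntervalIntegrable (fun v => p01 F (t + δ) (t - δ * v)) volume 0 L := by
    apply ContinuousOn.intervalIntegrable
    have hpath : Continuous (fun v : ℝ => ((t + δ, t - δ * v) : ℝ × ℝ)) := by
      exact continuous_const.prodMk (continuous_const.sub (continuous_const.mul continuous_id))
    refine (contOn_p01 hC).comp hpath.continuousOn ?_
    intro v hv
    rw [uIcc_of_le hL0.le] at hv
    simp only [mem_setOf_eq]
    have := mul_nonneg hδ0.le hv.1
    linarith only [this, hδ0]
  -- FTC evaluations
  have hA : ∫ v in (0:ℝ)..L, p01 F (t + δ) (t - δ * v)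
      = (Y - F (t + δ) (t - h₀)) / δ := by
    have h4 := ftc_piece hcont hC (by linarith : t ≤ t + δ) hδ0 hL0.le hI₁
    rw [hδL] at h4
    exact h4
  have hFtt : F t t = 0 := by
    refine Ftt_zero hcont hpos hh₂pos hdε₁ (c₂ := c₂) ?_
    intro h h0 hh
    exact ((hsand t htm h h0 hh).2.1).trans
      (mul_le_mul_of_nonneg_right (hx₂ t htm) (Real.rpow_nonneg (by positivity) _))
  have hB : ∫ v in (0:ℝ)..L, p01 F t (t - δ * v) = (0 - F t (t - h₀)) / δ := by
    have h4 := ftc_piece hcont hC (le_refl t) hδ0 hL0.le hI₂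
    rw [hδL, hFtt] at h4
    exact h4
  have hT : (∫ v in (0:ℝ)..L, (p01 F (t + δ) (t - δ * v) - p01 F t (t - δ * v)) / D)
      = ((Y - F (t + δ) (t - h₀)) / δ - (0 - F t (t - h₀)) / δ) / D := by
    rw [intervalIntegral.integral_div, intervalIntegral.integral_sub hI₁ hI₂, hA, hB]
  rw [hT]
  set E : ℝ := F (t + δ) (t - h₀) - F t (t - h₀) with hEdef
  have hkey : ((Y - F (t + δ) (t - h₀)) / δ - (0 - F t (t - h₀)) / δ) / D + 1 / d
      = (Q + d) / (Q * d) - E / (Q * Y) := by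
    rw [hEdef, hDval]
    field_simp
    ring
  rw [hkey]
  -- term 1
  have hterm1 : |(Q + d) / (Q * d)| ≤ ε / 4 := by
    rw [abs_div, abs_mul, abs_of_pos hd0]
    rw [div_le_iff₀ (mul_pos (lt_of_lt_of_le hdε₁ hQabs) hd0)]
    have k2 : d / 2 ≤ |Q| := by
      refine le_trans ?_ hQabs
      linarith only [hε₁b]
    have k3 : d / 2 * d ≤ |Q| * d := mul_le_mul_of_nonneg_right k2 hd0.le
    have k4 : ε / 4 * (d / 2 * d) ≤ ε / 4 * (|Q| * d) :=
      mul_le_mul_of_nonneg_left k3 (by linarith only [hε])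
    have k5 : |Q + d| ≤ ε₁ := hQ0
    linarith only [k4, k5, hε₁c]
  -- term 2 : mean value bound for E
  have hEb : |E| ≤ M' * δ := by
    have hsconv : Convex ℝ (Icc t (t + δ)) := convex_Icc _ _
    have hder' : ∀ x ∈ Icc t (t + δ),
        HasDerivWithinAt (fun s => F s (t - h₀)) (p10 F x (t - h₀)) (Icc t (t + δ)) x := by
      intro x hx
      exact ((hasDerivAt_p10 hC (by linarith [hx.1] : t - h₀ < x)).1).hasDerivWithinAt
    have hbd : ∀ x ∈ Icc t (t + δ), ‖p10 F x (t - h₀)‖ ≤ M' := by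
      intro x hx
      have hmem : ((x, t - h₀) : ℝ × ℝ) ∈ S := by
        have hIa : x ∈ Icc (-1:ℝ) 3 := ⟨by linarith [hx.1], by linarith [hx.2]⟩
        have hIb : t - h₀ ∈ Icc (-2:ℝ) 2 := ⟨by linarith, by linarith⟩
        exact ⟨⟨hIa, hIb⟩, by simp only [mem_setOf_eq]; linarith [hx.1]⟩
      exact (hM _ hmem).trans (le_max_left _ _)
    have hmvt := hsconv.norm_image_sub_le_of_norm_hasDerivWithin_le hder' hbd
      (left_mem_Icc.2 (by linarith)) (right_mem_Icc.2 (by linarith))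
    rw [Real.norm_eq_abs, show t + δ - t = δ by ring, Real.norm_eq_abs,
      abs_of_pos hδ0] at hmvt
    exact hmvt
  have hYlb : c₁ * (δ / h₂) ^ (d + ε₁) ≤ Y := by
    have h5 := (hsand (t + δ) htsm δ hδ0 hδh₂.le).1
    rw [show t + δ - δ = t by ring] at h5
    refine le_trans ?_ h5
    exact mul_le_mul_of_nonneg_right (hx₁ (t + δ) htsm)
      (Real.rpow_nonneg (by positivity) _)
  have hterm2 : |E / (Q * Y)| < ε / 2 := by
    rw [abs_div, abs_mul, abs_of_pos hYpos]
    rw [div_lt_iff₀ (mul_pos (abs_pos.2 hQne) hYpos)]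
    have hδa : δ ^ a * δ ^ (d + ε₁) = δ := by
      rw [← Real.rpow_add hδ0, show a + (d + ε₁) = 1 by rw [hadef]; ring, Real.rpow_one]
    have heqMδ : M' * δ = C₂ * δ ^ a * ((d - ε₁) * c₁ * (δ / h₂) ^ (d + ε₁)) := by
      have h8 : (δ / h₂) ^ (d + ε₁) = δ ^ (d + ε₁) / h₂ ^ (d + ε₁) :=
        Real.div_rpow hδ0.le hh₂pos.le _
      have hne1 : h₂ ^ (d + ε₁) ≠ 0 := ne_of_gt (Real.rpow_pos_of_pos hh₂pos _)
      have hne2 : (d - ε₁) * c₁ ≠ 0 := ne_of_gt (mul_pos hdε₁ hc₁pos)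
      symm
      calc C₂ * δ ^ a * ((d - ε₁) * c₁ * (δ / h₂) ^ (d + ε₁))
          = M' * h₂ ^ (d + ε₁) / ((d - ε₁) * c₁) * δ ^ a
            * ((d - ε₁) * c₁ * (δ ^ (d + ε₁) / h₂ ^ (d + ε₁))) := by rw [h8, hC₂def]
        _ = M' * (δ ^ a * δ ^ (d + ε₁)) * (h₂ ^ (d + ε₁) / h₂ ^ (d + ε₁))
            * (((d - ε₁) * c₁) / ((d - ε₁) * c₁)) := by ring
        _ = M' * δ := by rw [hδa, div_self hne1, div_self hne2, mul_one, mul_one]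
    have hrppos : 0 < (δ / h₂) ^ (d + ε₁) := Real.rpow_pos_of_pos (by positivity) _
    have hPpos : 0 < (d - ε₁) * c₁ * (δ / h₂) ^ (d + ε₁) := by positivity
    have hPle : (d - ε₁) * c₁ * (δ / h₂) ^ (d + ε₁) ≤ |Q| * Y := by
      have h7 := mul_le_mul hQabs hYlb (by positivity) (abs_nonneg Q)
      rw [mul_assoc]
      exact h7
    calc |E| ≤ M' * δ := hEb
      _ = C₂ * δ ^ a * ((d - ε₁) * c₁ * (δ / h₂) ^ (d + ε₁)) := heqMδ
      _ < (ε / 2) * ((d - ε₁) * c₁ * (δ / h₂) ^ (d + ε₁)) := by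
          exact mul_lt_mul_of_pos_right hδsmall hPpos
      _ ≤ ε / 2 * (|Q| * Y) := by
          exact mul_le_mul_of_nonneg_left hPle (by linarith)
  calc |(Q + d) / (Q * d) - E / (Q * Y)|
      ≤ |(Q + d) / (Q * d)| + |E / (Q * Y)| := abs_sub _ _
    _ < ε / 4 + ε / 2 := by
        have := hterm1; have := hterm2; linarith
    _ < ε := by linarith
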